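/- Let Φ : ℝ → ℝ be the continuous piecewise linear function with Φ(0) = 0 whose slope on the interval [2π(k−1), 2πk] equals k for every integer k. Then for all real t and every integer k, Φ(t + 2πk) − Φ(t) = πk² + tk + πk. -/

import Mathlib

lemma key_shift (Φ : ℝ → ℝ)
    (hslope : ∀ k : ℤ, ∀ t ∈ Set.Icc (2 * Real.pi * ((k : ℝ) - 1)) (2 * Real.pi * (k : ℝ)),
      Φ t = Φ (2 * Real.pi * ((k : ℝ) - 1)) + (k : ℝ) * (t - 2 * Real.pi * ((k : ℝ) - 1))) :
    ∀ t : ℝ, Φ (t + 2 * Real.pi) - Φ t = t + 2 * Real.pi := by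
  intro t
  have hpi := Real.pi_pos
  set k : ℤ := ⌈t / (2 * Real.pi)⌉ with hk
  have h2pi : (0:ℝ) < 2 * Real.pi := by linarith
  have hub : t ≤ 2 * Real.pi * (k : ℝ) := by
    have := Int.le_ceil (t / (2 * Real.pi))
    calc t = (t / (2 * Real.pi)) * (2 * Real.pi) := by field_simp
    _ ≤ (k : ℝ) * (2 * Real.pi) := by nlinarith
    _ = 2 * Real.pi * (k : ℝ) := by ring
  have hlb : 2 * Real.pi * ((k : ℝ) - 1) ≤ t := by
    have := Int.ceil_lt_add_one (t / (2 * Real.pi))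
    have h1 : (k : ℝ) - 1 < t / (2 * Real.pi) := by push_cast at this ⊢; linarith
    have : ((k : ℝ) - 1) * (2 * Real.pi) ≤ (t / (2 * Real.pi)) * (2 * Real.pi) := by nlinarith
    calc 2 * Real.pi * ((k : ℝ) - 1) = ((k : ℝ) - 1) * (2 * Real.pi) := by ring
    _ ≤ (t / (2 * Real.pi)) * (2 * Real.pi) := this
    _ = t := by field_simp
  have h1 := hslope k t ⟨hlb, hub⟩
  have h2 := hslope (k + 1) (t + 2 * Real.pi) (by
    constructor <;> push_cast <;> [skip; skip] <;> nlinarith)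
  have h3 := hslope k (2 * Real.pi * (k : ℝ)) ⟨by nlinarith, le_refl _⟩
  push_cast at h2
  have e : 2 * Real.pi * ((k : ℝ) + 1 - 1) = 2 * Real.pi * (k : ℝ) := by ring
  rw [e] at h2
  rw [h1, h2, h3]; ring

theorem stmt_0 (Φ : ℝ → ℝ) (hcont : Continuous Φ) (h0 : Φ 0 = 0)
    (hslope : ∀ k : ℤ, ∀ t ∈ Set.Icc (2 * Real.pi * ((k : ℝ) - 1)) (2 * Real.pi * (k : ℝ)),
      Φ t = Φ (2 * Real.pi * ((k : ℝ) - 1)) + (k : ℝ) * (t - 2 * Real.pi * ((k : ℝ) - 1))) :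
    ∀ (t : ℝ) (k : ℤ),
      Φ (t + 2 * Real.pi * (k : ℝ)) - Φ t
        = Real.pi * (k : ℝ) ^ 2 + t * (k : ℝ) + Real.pi * (k : ℝ) := by
  have key := key_shift Φ hslope
  intro t k
  induction k using Int.induction_on with
  | zero => simp
  | succ n ih =>
    have h := key (t + 2 * Real.pi * (n : ℝ))
    have e : t + 2 * Real.pi * (n : ℝ) + 2 * Real.pi = t + 2 * Real.pi * ((n : ℤ) + 1 : ℤ) := by
      push_cast; ring
    push_cast at e h ih ⊢
    rw [e] at h
    linear_combination h + ih
  | pred n ih =>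
    have h := key (t + 2 * Real.pi * (-(n : ℝ) - 1))
    have e : t + 2 * Real.pi * (-(n : ℝ) - 1) + 2 * Real.pi = t + 2 * Real.pi * (-(n : ℝ)) := by
      ring
    rw [e] at h
    push_cast at h ih ⊢
    linear_combination ih - h
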